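/- arXiv:2202.11691 — 3 statements merged into one kernel-verified Lean document; each statement's English description precedes it below -/
import Mathlib

section
/- Consider two disks of equal radius r centered at points A and B with distance d = ‖AB‖ ≤ r. Let β = 2·arccos(d/(2r)). Then the area S of the region inside exactly one of the two disks minus a half-disk and a lens correction, namely S = (π r²)/2 + d·√(r² − (d/2)²) − d·√(r² − d²) − (r² β)/2, satisfies S ≥ (1/2)·r·d. -/
open Real

/-- For two disks of equal radius r at center distance d with 0 < d ≤ r,
the area S = (π r²)/2 + d·√(r² − (d/2)²) − d·√(r² − d²) − (r² β)/2, with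
β = 2·arccos(d/(2r)), satisfies S ≥ (1/2)·r·d. -/
theorem stmt_2 (r d : ℝ) (hd : 0 < d) (hdr : d ≤ r) :
    let β := 2 * Real.arccos (d / (2 * r))
    let S := π * r ^ 2 / 2 + d * Real.sqrt (r ^ 2 - (d / 2) ^ 2)
      - d * Real.sqrt (r ^ 2 - d ^ 2) - r ^ 2 * β / 2
    (1 / 2) * r * d ≤ S := by
  intro β S
  have hr : 0 < r := hd.trans_le hdr
  set x : ℝ := d / (2 * r) with hx
  have hx0 : 0 ≤ x := by positivity
  have hx1 : x ≤ 1 := by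
    rw [hx, div_le_one (by positivity)]; linarith
  have harcsin : x ≤ Real.arcsin x := by
    nth_rewrite 1 [← Real.sin_arcsin (by linarith) hx1]
    exact Real.sin_le (Real.arcsin_nonneg.2 hx0)
  have harccos : Real.arccos x = π / 2 - Real.arcsin x := Real.arccos_eq_pi_div_two_sub_arcsin x
  have hsq : Real.sqrt (r ^ 2 - d ^ 2) ≤ Real.sqrt (r ^ 2 - (d / 2) ^ 2) := by
    apply Real.sqrt_le_sqrt; nlinarith
  have harc2 : r ^ 2 * x ≤ r ^ 2 * Real.arcsin x :=
    mul_le_mul_of_nonneg_left harcsin (by positivity)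
  have hxval : r ^ 2 * x = 1 / 2 * r * d := by
    field_simp [hx]; rw [hx]; field_simp
  have : S = r ^ 2 * Real.arcsin x
      + d * (Real.sqrt (r ^ 2 - (d / 2) ^ 2) - Real.sqrt (r ^ 2 - d ^ 2)) := by
    simp only [S, β, ← hx, harccos]; ring
  rw [this]
  nlinarith [mul_nonneg hd.le (sub_nonneg.2 hsq)]
end

section
/- Let k ≥ 1 be an integer, ξ ∈ ℝ, and for each n let r_n = √((log n + (2k−1)·log log n + ξ)/(π n)). Then n·∫₀^{r_n/2} (n·a(r_n,t))^k · exp(−n·a(r_n,t))/k! dt → (√π / (2^{k+1} k!))·e^{−ξ/2} as n → ∞, where a(r,t) is the area of {x₁²+x₂² ≤ r², x₁ ≤ t}. -/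
set_option maxHeartbeats 1000000

open Real MeasureTheory Filter

/-- The area a(r,t) of the portion of the disk of radius r centered at the origin
lying in the half-plane {x₁ ≤ t}. -/
noncomputable def segArea (r t : ℝ) : ℝ :=
  (volume {p : ℝ × ℝ | p.1 ^ 2 + p.2 ^ 2 ≤ r ^ 2 ∧ p.1 ≤ t}).toReal

lemma slice_eq (r t x : ℝ) (hr : 0 ≤ r) (ht : t ≤ r) :
    {y : ℝ | x ^ 2 + y ^ 2 ≤ r ^ 2 ∧ x ≤ t}
      = if x ∈ Set.Icc (-r) t then Set.Icc (-Real.sqrt (r^2 - x^2)) (Real.sqrt (r^2 - x^2))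
        else ∅ := by
  split_ifs with h
  · obtain ⟨h1, h2⟩ := h
    ext y
    simp only [Set.mem_setOf_eq, Set.mem_Icc]
    constructor
    · rintro ⟨hy, -⟩
      have hy2 : y ^ 2 ≤ r ^ 2 - x ^ 2 := by linarith
      have := Real.sqrt_le_sqrt hy2
      rw [Real.sqrt_sq_eq_abs] at this
      constructor <;> [linarith [abs_le.mp this]; linarith [abs_le.mp this]]
    · rintro ⟨hy1, hy2⟩
      refine ⟨?_, h2⟩
      have h0 : 0 ≤ r ^ 2 - x ^ 2 := by nlinarith [le_trans h2 ht]
      have : y ^ 2 ≤ r ^ 2 - x ^ 2 := by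
        have hys : |y| ≤ Real.sqrt (r^2 - x^2) := abs_le.mpr ⟨hy1, hy2⟩
        calc y ^ 2 = |y| ^ 2 := (sq_abs y).symm
        _ ≤ Real.sqrt (r^2 - x^2) ^ 2 := by
              exact pow_le_pow_left₀ (abs_nonneg y) hys 2
        _ = r ^ 2 - x ^ 2 := Real.sq_sqrt h0
      linarith
  · ext y
    simp only [Set.mem_setOf_eq, Set.mem_empty_iff_false, iff_false]
    rintro ⟨hy, hxt⟩
    apply h
    constructor
    · nlinarith [sq_nonneg y]
    · exact hxt

lemma segArea_eq (r t : ℝ) (hr : 0 ≤ r) (h1 : -r ≤ t) (h2 : t ≤ r) :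
    segArea r t = ∫ x in (-r)..t, 2 * Real.sqrt (r ^ 2 - x ^ 2) := by
  have hS : MeasurableSet {p : ℝ × ℝ | p.1 ^ 2 + p.2 ^ 2 ≤ r ^ 2 ∧ p.1 ≤ t} := by
    have hcl : IsClosed {p : ℝ × ℝ | p.1 ^ 2 + p.2 ^ 2 ≤ r ^ 2 ∧ p.1 ≤ t} :=
      IsClosed.inter
        (isClosed_le (((continuous_fst.pow 2).add (continuous_snd.pow 2))) continuous_const)
        (isClosed_le continuous_fst continuous_const)
    exact hcl.measurableSet
  have hvol : volume {p : ℝ × ℝ | p.1 ^ 2 + p.2 ^ 2 ≤ r ^ 2 ∧ p.1 ≤ t}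
      = ∫⁻ x in Set.Icc (-r) t, ENNReal.ofReal (2 * Real.sqrt (r ^ 2 - x ^ 2)) := by
    rw [Measure.volume_eq_prod, Measure.prod_apply hS]
    have hsl : ∀ x : ℝ,
        volume (Prod.mk x ⁻¹' {p : ℝ × ℝ | p.1 ^ 2 + p.2 ^ 2 ≤ r ^ 2 ∧ p.1 ≤ t})
        = (Set.Icc (-r) t).indicator
            (fun x => ENNReal.ofReal (2 * Real.sqrt (r ^ 2 - x ^ 2))) x := by
      intro x
      have hpre : Prod.mk x ⁻¹' {p : ℝ × ℝ | p.1 ^ 2 + p.2 ^ 2 ≤ r ^ 2 ∧ p.1 ≤ t}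
          = {y : ℝ | x ^ 2 + y ^ 2 ≤ r ^ 2 ∧ x ≤ t} := rfl
      rw [hpre, slice_eq r t x hr h2]
      by_cases h : x ∈ Set.Icc (-r) t
      · rw [if_pos h, Set.indicator_of_mem h, Real.volume_Icc]
        congr 1; ring
      · rw [if_neg h, Set.indicator_of_notMem h, measure_empty]
    simp_rw [hsl]
    rw [lintegral_indicator measurableSet_Icc]
  have hnn : 0 ≤ᵐ[volume.restrict (Set.Icc (-r) t)]
      fun x => 2 * Real.sqrt (r ^ 2 - x ^ 2) :=
    Filter.Eventually.of_forall fun x => by positivity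
  have hmeas : AEStronglyMeasurable (fun x => 2 * Real.sqrt (r ^ 2 - x ^ 2))
      (volume.restrict (Set.Icc (-r) t)) :=
    (continuous_const.mul ((continuous_const.sub (continuous_pow 2)).sqrt)).aestronglyMeasurable
  rw [segArea, hvol, ← integral_eq_lintegral_of_nonneg_ae hnn hmeas,
    intervalIntegral.integral_of_le h1, ← integral_Icc_eq_integral_Ioc]

lemma cont_integrand (r : ℝ) : Continuous fun x : ℝ => 2 * Real.sqrt (r ^ 2 - x ^ 2) :=
  continuous_const.mul ((continuous_const.sub (continuous_pow 2)).sqrt)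

lemma intInt (r a b : ℝ) : IntervalIntegrable (fun x => 2 * Real.sqrt (r ^ 2 - x ^ 2))
    volume a b := (cont_integrand r).intervalIntegrable a b

lemma integral_halfdisk (r : ℝ) (hr : 0 ≤ r) :
    ∫ x in (-r)..(0:ℝ), 2 * Real.sqrt (r ^ 2 - x ^ 2) = π * r ^ 2 / 2 := by
  rcases eq_or_lt_of_le hr with h0 | h0
  · simp [← h0]
  have key0 : ∫ x in (-1:ℝ)..0, Real.sqrt (1 - x ^ 2) = π / 4 := by
    have hsym : (∫ x in (0:ℝ)..1, Real.sqrt (1 - (-x) ^ 2))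
        = ∫ x in (-(1:ℝ))..(-(0:ℝ)), Real.sqrt (1 - x ^ 2) :=
      intervalIntegral.integral_comp_neg (fun x => Real.sqrt (1 - x ^ 2))
    rw [neg_zero] at hsym
    have hs2 : (∫ x in (0:ℝ)..1, Real.sqrt (1 - x ^ 2))
        = ∫ x in (-1:ℝ)..0, Real.sqrt (1 - x ^ 2) := by
      rw [← hsym]
      apply intervalIntegral.integral_congr
      intro x _; simp [neg_pow]
    have hsplit : (∫ x in (-1:ℝ)..0, Real.sqrt (1 - x ^ 2))
        + ∫ x in (0:ℝ)..1, Real.sqrt (1 - x ^ 2) = π / 2 := by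
      rw [intervalIntegral.integral_add_adjacent_intervals
        (f := fun x : ℝ => Real.sqrt (1 - x ^ 2))
        (((continuous_const.sub (continuous_pow 2)).sqrt).intervalIntegrable _ _)
        (((continuous_const.sub (continuous_pow 2)).sqrt).intervalIntegrable _ _)]
      exact integral_sqrt_one_sub_sq
    rw [hs2] at hsplit; linarith
  have hcomp : ∫ x in (-1:ℝ)..0, 2 * Real.sqrt (r ^ 2 - (r * x) ^ 2)
      = r⁻¹ • ∫ x in (-r)..(0:ℝ), 2 * Real.sqrt (r ^ 2 - x ^ 2) := by
    simpa using intervalIntegral.integral_comp_mul_left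
      (fun x => 2 * Real.sqrt (r ^ 2 - x ^ 2)) (ne_of_gt h0) (a := -1) (b := 0)
  have hscale : ∀ x : ℝ, 2 * Real.sqrt (r ^ 2 - (r * x) ^ 2)
      = (2 * r) * Real.sqrt (1 - x ^ 2) := by
    intro x
    have : r ^ 2 - (r * x) ^ 2 = r ^ 2 * (1 - x ^ 2) := by ring
    rw [this, Real.sqrt_mul (sq_nonneg r), Real.sqrt_sq hr]; ring
  have : ∫ x in (-1:ℝ)..0, 2 * Real.sqrt (r ^ 2 - (r * x) ^ 2)
      = (2 * r) * (π / 4) := by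
    simp_rw [hscale]
    rw [intervalIntegral.integral_const_mul, key0]
  rw [this] at hcomp
  have hr0 : r ≠ 0 := ne_of_gt h0
  rw [smul_eq_mul] at hcomp
  field_simp at hcomp ⊢
  nlinarith [hcomp]

lemma phi_lb (r t : ℝ) (ht : 0 ≤ t) :
    2 * t * Real.sqrt (r ^ 2 - t ^ 2) ≤ ∫ x in (0:ℝ)..t, 2 * Real.sqrt (r ^ 2 - x ^ 2) := by
  have h : ∀ x ∈ Set.Icc (0:ℝ) t,
      (fun _ : ℝ => 2 * Real.sqrt (r ^ 2 - t ^ 2)) x ≤ 2 * Real.sqrt (r ^ 2 - x ^ 2) := by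
    intro x hx
    have : r ^ 2 - t ^ 2 ≤ r ^ 2 - x ^ 2 := by nlinarith [hx.1, hx.2]
    exact mul_le_mul_of_nonneg_left (Real.sqrt_le_sqrt this) (by norm_num)
  have := intervalIntegral.integral_mono_on ht
    (intervalIntegrable_const) (intInt r 0 t) h
  simpa [mul_comm, mul_assoc, mul_left_comm] using this

lemma phi_ub (r t : ℝ) (hr : 0 ≤ r) (ht : 0 ≤ t) :
    (∫ x in (0:ℝ)..t, 2 * Real.sqrt (r ^ 2 - x ^ 2)) ≤ 2 * t * r := by
  have h : ∀ x ∈ Set.Icc (0:ℝ) t,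
      2 * Real.sqrt (r ^ 2 - x ^ 2) ≤ (fun _ : ℝ => 2 * r) x := by
    intro x hx
    simp only []
    have h1 : Real.sqrt (r ^ 2 - x ^ 2) ≤ Real.sqrt (r ^ 2) :=
      Real.sqrt_le_sqrt (by nlinarith [sq_nonneg x])
    rw [Real.sqrt_sq hr] at h1
    linarith
  have := intervalIntegral.integral_mono_on ht (intInt r 0 t) intervalIntegrable_const h
  simpa [mul_comm, mul_assoc, mul_left_comm] using this

lemma segArea_formula (r t : ℝ) (hr : 0 ≤ r) (h0 : 0 ≤ t) (h2 : t ≤ r) :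
    segArea r t = π * r ^ 2 / 2 + ∫ x in (0:ℝ)..t, 2 * Real.sqrt (r ^ 2 - x ^ 2) := by
  rw [segArea_eq r t hr (by linarith) h2,
    ← intervalIntegral.integral_add_adjacent_intervals (intInt r (-r) 0) (intInt r 0 t),
    integral_halfdisk r hr]

lemma P_eq (k : ℕ) (ξ N l Ln : ℝ) (hN : 1 ≤ N) (hl : 1 ≤ l) (hLn : 0 < Ln)
    (hlog : Real.log N = l) (hLdef : Ln = l + (2 * k - 1) * Real.log l + ξ) :
    1 / (2 * Real.sqrt (Ln / (π * N))) * Real.exp (-Ln / 2) * (Ln / 2) ^ k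
        / (Nat.factorial k)
      = (Real.sqrt π / (2 ^ (k + 1) * Nat.factorial k) * Real.exp (-ξ / 2))
        * (Ln / l) ^ ((k:ℝ) - 1/2) := by
  have hN0 : (0:ℝ) < N := by linarith
  have hl0 : (0:ℝ) < l := by linarith
  have hQ : 0 < Ln / (π * N) := by positivity
  have hfac : (0:ℝ) < (Nat.factorial k : ℝ) := by positivity
  have e1 : Real.sqrt (Ln / (π * N)) = Real.exp ((Real.log Ln - Real.log π - l) / 2) := by
    rw [← Real.exp_log (Real.sqrt_pos.mpr hQ), Real.log_sqrt (le_of_lt hQ),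
      Real.log_div (ne_of_gt hLn) (by positivity),
      Real.log_mul (ne_of_gt pi_pos) (ne_of_gt hN0), hlog]
    ring_nf
  have e2 : (Ln / 2) ^ k = Real.exp ((k:ℝ) * Real.log Ln) / 2 ^ k := by
    rw [div_pow, ← Real.exp_log (pow_pos hLn k), Real.log_pow]
  have e3 : Real.sqrt π = Real.exp (Real.log π / 2) := by
    rw [← Real.exp_log (Real.sqrt_pos.mpr pi_pos), Real.log_sqrt pi_pos.le]
  have e4 : (Ln / l) ^ ((k:ℝ) - 1/2)
      = Real.exp (((k:ℝ) - 1/2) * (Real.log Ln - Real.log l)) := by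
    rw [Real.rpow_def_of_pos (div_pos hLn hl0), Real.log_div (ne_of_gt hLn) (ne_of_gt hl0)]
    ring_nf
  have coll : ∀ x y z : ℝ,
      1 / (2 * Real.exp x) * Real.exp y * (Real.exp z / 2 ^ k) / (Nat.factorial k : ℝ)
        = 1 / (2 ^ (k+1) * (Nat.factorial k : ℝ)) * Real.exp (-x + y + z) := by
    intro x y z
    rw [Real.exp_add, Real.exp_add, Real.exp_neg]
    have := Real.exp_pos x
    field_simp
    ring
  have coll2 : ∀ p q w : ℝ,
      Real.exp p / (2 ^ (k+1) * (Nat.factorial k : ℝ)) * Real.exp q * Real.exp w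
        = 1 / (2 ^ (k+1) * (Nat.factorial k : ℝ)) * Real.exp (p + q + w) := by
    intro p q w
    rw [Real.exp_add, Real.exp_add]; ring
  rw [e1, e2, e3, e4, coll, coll2]
  congr 1
  rw [Real.exp_eq_exp]
  linear_combination (-(1:ℝ)/2) * hLdef


/-- Lemma 4(1). -/
theorem stmt_9 (k : ℕ) (hk : 1 ≤ k) (ξ : ℝ)
    (r : ℕ → ℝ)
    (hr : ∀ n : ℕ, r n =
      Real.sqrt ((Real.log n + (2 * k - 1) * Real.log (Real.log n) + ξ) / (π * n))) :
    Tendsto (fun n : ℕ =>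
        (n : ℝ) * ∫ t in (0:ℝ)..(r n / 2),
          ((n : ℝ) * segArea (r n) t) ^ k * Real.exp (-(n : ℝ) * segArea (r n) t)
            / (Nat.factorial k))
      atTop (nhds (Real.sqrt π / (2 ^ (k + 1) * Nat.factorial k) * Real.exp (-ξ / 2))) := by
  -- basic objects
  set L : ℕ → ℝ := fun n => Real.log n + (2 * k - 1) * Real.log (Real.log n) + ξ with hL
  set C : ℝ := Real.sqrt π / (2 ^ (k + 1) * Nat.factorial k) * Real.exp (-ξ / 2) with hC
  set φ : ℕ → ℝ → ℝ := fun n u =>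
    (n : ℝ) * ∫ x in (0:ℝ)..(u / (2 * n * r n)), 2 * Real.sqrt ((r n) ^ 2 - x ^ 2) with hφ
  set B : ℕ → ℝ := fun n => (n : ℝ) * (r n) ^ 2 with hB
  set h : ℕ → ℝ → ℝ := fun n u =>
    (1 + 2 * φ n u / L n) ^ k * Real.exp (-(φ n u)) with hh
  set F : ℕ → ℝ → ℝ := fun n u => (Set.Ioc 0 (B n)).indicator (h n) u with hF
  set J : ℕ → ℝ := fun n => ∫ u, F n u with hJ
  set P : ℕ → ℝ := fun n =>
    (1 / (2 * r n)) * Real.exp (-(L n) / 2) * (L n / 2) ^ k / (Nat.factorial k) with hP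
  -- L tends to infinity
  have hk1 : (1:ℝ) ≤ 2 * k - 1 := by
    have : (1:ℝ) ≤ (k:ℝ) := by exact_mod_cast hk
    linarith
  have hlogtop : Tendsto (fun n : ℕ => Real.log n) atTop atTop :=
    Real.tendsto_log_atTop.comp tendsto_natCast_atTop_atTop
  have hLtop : Tendsto L atTop atTop := by
    have h1 : Tendsto (fun n : ℕ => Real.log (Real.log n)) atTop atTop :=
      Real.tendsto_log_atTop.comp hlogtop
    have h2 : Tendsto (fun n : ℕ => (2 * k - 1) * Real.log (Real.log n)) atTop atTop :=
      h1.const_mul_atTop (by linarith)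
    have h3 : Tendsto (fun n : ℕ => Real.log n + (2 * k - 1) * Real.log (Real.log n))
        atTop atTop := hlogtop.atTop_add_atTop h2
    exact tendsto_atTop_add_const_right _ ξ h3
  -- the collection of "good n" facts
  have hgood : ∀ᶠ n : ℕ in atTop, 1 ≤ Real.log n ∧ (8 * k : ℝ) ≤ L n ∧ 1 ≤ L n
      ∧ 1 ≤ (n:ℝ) := by
    filter_upwards [hlogtop.eventually_ge_atTop 1, hLtop.eventually_ge_atTop (8 * k : ℝ),
      hLtop.eventually_ge_atTop 1, eventually_ge_atTop 1] with n h1 h2 h3 h4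
    exact ⟨h1, h2, h3, by exact_mod_cast h4⟩
  -- key consequences for good n
  have hrL : ∀ n : ℕ, 1 ≤ Real.log n → 1 ≤ L n → 1 ≤ (n:ℝ) →
      0 < r n ∧ (r n) ^ 2 = L n / (π * n) ∧ (n:ℝ) * π * (r n) ^ 2 = L n := by
    intro n h1 h3 h4
    have hn0 : (0:ℝ) < n := by linarith
    have hq : 0 < L n / (π * n) := by positivity
    have hrn : r n = Real.sqrt (L n / (π * n)) := hr n
    refine ⟨by rw [hrn]; exact Real.sqrt_pos.mpr hq, ?_, ?_⟩
    · rw [hrn, Real.sq_sqrt (le_of_lt hq)]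
    · rw [hrn, Real.sq_sqrt (le_of_lt hq)]
      field_simp
  -- Step 1: eventual equality with P * J
  have hstep1 : ∀ᶠ n : ℕ in atTop,
      (n : ℝ) * (∫ t in (0:ℝ)..(r n / 2),
          ((n : ℝ) * segArea (r n) t) ^ k * Real.exp (-(n : ℝ) * segArea (r n) t)
            / (Nat.factorial k)) = P n * J n := by
    filter_upwards [hgood] with n hn
    obtain ⟨hrn0, hrsq, hLr⟩ := hrL n hn.1 hn.2.2.1 hn.2.2.2
    have hn0 : (0:ℝ) < n := lt_of_lt_of_le one_pos hn.2.2.2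
    have hLn0 : (0:ℝ) < L n := lt_of_lt_of_le one_pos hn.2.2.1
    set w : ℝ → ℝ := fun t => (L n / 2 + (n:ℝ) * ∫ x in (0:ℝ)..t,
        2 * Real.sqrt ((r n) ^ 2 - x ^ 2)) ^ k
      * Real.exp (-(L n / 2 + (n:ℝ) * ∫ x in (0:ℝ)..t, 2 * Real.sqrt ((r n) ^ 2 - x ^ 2)))
      / (Nat.factorial k) with hw
    -- replace segArea by the explicit formula
    have hcong : (∫ t in (0:ℝ)..(r n / 2),
        ((n : ℝ) * segArea (r n) t) ^ k * Real.exp (-(n : ℝ) * segArea (r n) t)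
          / (Nat.factorial k)) = ∫ t in (0:ℝ)..(r n / 2), w t := by
      apply intervalIntegral.integral_congr
      intro t ht
      rw [Set.uIcc_of_le (by positivity)] at ht
      have hformula := segArea_formula (r n) t hrn0.le ht.1 (le_trans ht.2 (by linarith))
      have h3 : (n:ℝ) * segArea (r n) t
          = L n / 2 + (n:ℝ) * ∫ x in (0:ℝ)..t, 2 * Real.sqrt ((r n) ^ 2 - x ^ 2) := by
        rw [hformula, mul_add]
        congr 1
        rw [← hLr]; ring
      rw [hw]
      simp only [neg_mul, h3]
    -- substitution u = 2 n r t
    have hc0 : (2:ℝ) * n * r n ≠ 0 := by positivity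
    have hsub : (∫ u in (0:ℝ)..((n:ℝ) * (r n) ^ 2), w (u / (2 * n * r n)))
        = (2 * (n:ℝ) * r n) • ∫ t in (0:ℝ)..(r n / 2), w t := by
      have hcd := intervalIntegral.integral_comp_div (a := (0:ℝ))
        (b := (n:ℝ) * (r n) ^ 2) (f := w) (c := 2 * n * r n) hc0
      have he1 : (0:ℝ) / (2 * (n:ℝ) * r n) = 0 := by simp
      have he2 : ((n:ℝ) * (r n) ^ 2) / (2 * (n:ℝ) * r n) = r n / 2 := by
        field_simp
      rw [he1, he2] at hcd
      exact hcd
    -- factor the integrand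
    have hfac : ∀ u : ℝ, w (u / (2 * n * r n))
        = (Real.exp (-(L n) / 2) * (L n / 2) ^ k / (Nat.factorial k)) * h n u := by
      intro u
      rw [hw, hh]
      simp only [hφ]
      set y : ℝ := (n:ℝ) * ∫ x in (0:ℝ)..(u / (2 * (n:ℝ) * r n)),
        2 * Real.sqrt ((r n) ^ 2 - x ^ 2) with hy
      have hid : L n / 2 + y = (L n / 2) * (1 + 2 * y / L n) := by
        field_simp
      rw [hid, mul_pow, show -((L n / 2) * (1 + 2 * y / L n)) = -(L n) / 2 + -y by
        rw [← hid]; ring, Real.exp_add]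
      ring
    have hJn : J n = ∫ u in (0:ℝ)..((n:ℝ) * (r n) ^ 2), h n u := by
      rw [hJ]
      simp only [hF]
      rw [integral_indicator measurableSet_Ioc,
        intervalIntegral.integral_of_le (by positivity : (0:ℝ) ≤ (n:ℝ) * (r n) ^ 2)]
    have hint2 : (∫ u in (0:ℝ)..((n:ℝ) * (r n) ^ 2), w (u / (2 * n * r n)))
        = (Real.exp (-(L n) / 2) * (L n / 2) ^ k / (Nat.factorial k)) * J n := by
      rw [hJn, ← intervalIntegral.integral_const_mul]
      apply intervalIntegral.integral_congr
      intro u _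
      exact hfac u
    rw [hcong]
    have hint3 : (∫ t in (0:ℝ)..(r n / 2), w t)
        = (Real.exp (-(L n) / 2) * (L n / 2) ^ k / (Nat.factorial k)) * J n
          / (2 * (n:ℝ) * r n) := by
      rw [← hint2, hsub, smul_eq_mul]
      field_simp
    rw [hint3, hP]
    simp only []
    field_simp
  -- Step 2: J → 1
  have hsqrt3 : (3:ℝ)/2 ≤ Real.sqrt 3 := by
    nlinarith [Real.sq_sqrt (by norm_num : (0:ℝ) ≤ 3), Real.sqrt_nonneg 3]
  have hφcont : ∀ n : ℕ, Continuous (φ n) := by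
    intro n
    apply continuous_const.mul
    exact (intervalIntegral.continuous_primitive (fun a b => intInt (r n) a b) 0).comp
      (continuous_id.div_const _)
  have hhcont : ∀ n : ℕ, Continuous (h n) := by
    intro n
    exact ((continuous_const.add ((continuous_const.mul (hφcont n)).div_const (L n))).pow
      k).mul ((hφcont n).neg.rexp)
  -- upper bound on φ
  have hφub : ∀ n : ℕ, 0 < (n:ℝ) → 0 < r n → ∀ u : ℝ, 0 ≤ u → φ n u ≤ u := by
    intro n hn0 hrn0 u hu
    have ht0 : 0 ≤ u / (2 * n * r n) := by positivity
    have h1 := phi_ub (r n) (u / (2 * n * r n)) hrn0.le ht0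
    have h2 : (n:ℝ) * (2 * (u / (2 * n * r n)) * r n) = u := by field_simp
    calc φ n u ≤ (n:ℝ) * (2 * (u / (2 * n * r n)) * r n) := by
          exact mul_le_mul_of_nonneg_left h1 hn0.le
      _ = u := h2
  -- lower bound on φ
  have hφlb : ∀ n : ℕ, 0 < (n:ℝ) → 0 < r n → ∀ u : ℝ, 0 ≤ u →
      u * Real.sqrt (1 - (u / (2 * n * (r n)^2))^2) ≤ φ n u := by
    intro n hn0 hrn0 u hu
    set t := u / (2 * n * r n) with hts
    have ht0 : 0 ≤ t := by positivity
    have h1 := phi_lb (r n) t ht0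
    have h2 : Real.sqrt ((r n)^2 - t^2) = r n * Real.sqrt (1 - (t / r n)^2) := by
      rw [show (r n)^2 - t^2 = (r n)^2 * (1 - (t / r n)^2) by field_simp,
        Real.sqrt_mul (sq_nonneg _), Real.sqrt_sq hrn0.le]
    have h3 : t / r n = u / (2 * n * (r n)^2) := by
      rw [hts, div_div]
      congr 1
      ring
    have h4 : (n:ℝ) * (2 * t * Real.sqrt ((r n)^2 - t^2))
        = u * Real.sqrt (1 - (u / (2 * n * (r n)^2))^2) := by
      rw [h2, ← h3, hts]; field_simp
    calc u * Real.sqrt (1 - (u / (2 * n * (r n)^2))^2)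
        = (n:ℝ) * (2 * t * Real.sqrt ((r n)^2 - t^2)) := h4.symm
      _ ≤ φ n u := mul_le_mul_of_nonneg_left h1 hn0.le
  -- φ is nonneg
  have hφnn : ∀ n : ℕ, 0 < (n:ℝ) → 0 < r n → ∀ u : ℝ, 0 ≤ u → 0 ≤ φ n u := by
    intro n hn0 hrn0 u hu
    refine le_trans ?_ (hφlb n hn0 hrn0 u hu)
    positivity
  have hstep2 : Tendsto J atTop (nhds 1) := by
    set g : ℝ → ℝ := (Set.Ioi (0:ℝ)).indicator (fun u => Real.exp (-u)) with hg
    set bound : ℝ → ℝ := (Set.Ioi (0:ℝ)).indicator (fun u => Real.exp (-(1/2) * u)) with hbd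
    have hgint : (∫ u, g u) = 1 := by
      rw [hg, integral_indicator measurableSet_Ioi]
      exact integral_exp_neg_Ioi_zero
    have hbint : Integrable bound := by
      rw [hbd]
      exact (exp_neg_integrableOn_Ioi 0 one_half_pos).integrable_indicator measurableSet_Ioi
    have hbnn : ∀ u, 0 ≤ bound u := by
      intro u
      exact Set.indicator_nonneg (fun v _ => (Real.exp_pos _).le) u
    have hFmeas : ∀ᶠ n : ℕ in atTop, AEStronglyMeasurable (F n) volume :=
      Eventually.of_forall fun n =>
        ((hhcont n).aestronglyMeasurable).indicator measurableSet_Ioc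
    have hBtop : Tendsto B atTop atTop := by
      have h1 : Tendsto (fun n => L n / π) atTop atTop :=
        hLtop.atTop_div_const pi_pos
      apply Tendsto.congr' _ h1
      filter_upwards [hgood] with n hn
      have := (hrL n hn.1 hn.2.2.1 hn.2.2.2).2.2
      rw [hB]
      simp only []
      rw [← this]
      field_simp
    -- the domination bound
    have h_bound : ∀ᶠ n : ℕ in atTop, ∀ᵐ u : ℝ, ‖F n u‖ ≤ bound u := by
      filter_upwards [hgood] with n hn
      refine Eventually.of_forall fun u => ?_
      obtain ⟨hrn0, hrsq, hLr⟩ := hrL n hn.1 hn.2.2.1 hn.2.2.2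
      have hn0 : (0:ℝ) < n := lt_of_lt_of_le one_pos hn.2.2.2
      have hLn0 : (0:ℝ) < L n := lt_of_lt_of_le one_pos hn.2.2.1
      by_cases hu : u ∈ Set.Ioc 0 (B n)
      · have hu0 : 0 < u := hu.1
        rw [hF]
        simp only [Set.indicator_of_mem hu]
        have hbu : bound u = Real.exp (-(1/2) * u) := by
          rw [hbd, Set.indicator_of_mem (Set.mem_Ioi.mpr hu0)]
        have hφu := hφub n hn0 hrn0 u hu0.le
        have hφn := hφnn n hn0 hrn0 u hu0.le
        -- φ ≥ (√3/2) u
        have hphl : Real.sqrt 3 / 2 * u ≤ φ n u := by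
          have h1 := hφlb n hn0 hrn0 u hu0.le
          have ht : u / (2 * n * (r n)^2) ≤ 1/2 := by
            rw [div_le_iff₀ (by positivity)]
            have : u ≤ (n:ℝ) * (r n)^2 := hu.2
            nlinarith
          have ht0 : 0 ≤ u / (2 * n * (r n)^2) := by positivity
          have h34 : (3:ℝ)/4 ≤ 1 - (u / (2 * n * (r n)^2))^2 := by nlinarith
          have h5 : Real.sqrt 3 / 2 ≤ Real.sqrt (1 - (u / (2 * n * (r n)^2))^2) := by
            have h6 := Real.sqrt_le_sqrt h34
            have h7 : Real.sqrt ((3:ℝ)/4) = Real.sqrt 3 / 2 := by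
              rw [show (3/4:ℝ) = 3 * (1/2)^2 by norm_num,
                Real.sqrt_mul (by norm_num : (0:ℝ) ≤ 3),
                Real.sqrt_sq (by norm_num : (0:ℝ) ≤ 1/2)]
              ring
            rw [h7] at h6
            exact h6
          calc Real.sqrt 3 / 2 * u = u * (Real.sqrt 3 / 2) := by ring
            _ ≤ u * Real.sqrt (1 - (u / (2 * n * (r n)^2))^2) :=
                mul_le_mul_of_nonneg_left h5 hu0.le
            _ ≤ φ n u := h1
        -- bound the norm
        have hbase : (0:ℝ) ≤ 1 + 2 * φ n u / L n := by positivity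
        have hnn : 0 ≤ h n u := by
          rw [hh]; positivity
        rw [Real.norm_of_nonneg hnn, hbu, hh]
        simp only []
        have e1 : (1 + 2 * φ n u / L n) ^ k ≤ Real.exp ((k:ℝ) * (2 * u / L n)) := by
          calc (1 + 2 * φ n u / L n) ^ k ≤ (1 + 2 * u / L n) ^ k := by
                apply pow_le_pow_left₀ hbase
                have h9 : 2 * φ n u / L n ≤ 2 * u / L n := by
                  gcongr
                linarith
            _ ≤ Real.exp (2 * u / L n) ^ k := by
                apply pow_le_pow_left₀ (by positivity)
                linarith [Real.add_one_le_exp (2 * u / L n)]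
            _ = Real.exp ((k:ℝ) * (2 * u / L n)) := by
                rw [← Real.exp_nat_mul]
        have e2 : Real.exp (-(φ n u)) ≤ Real.exp (-(Real.sqrt 3 / 2 * u)) :=
          Real.exp_le_exp.mpr (by linarith)
        calc (1 + 2 * φ n u / L n) ^ k * Real.exp (-(φ n u))
            ≤ Real.exp ((k:ℝ) * (2 * u / L n)) * Real.exp (-(Real.sqrt 3 / 2 * u)) := by
              apply mul_le_mul e1 e2 (Real.exp_pos _).le (Real.exp_pos _).le
          _ = Real.exp ((k:ℝ) * (2 * u / L n) - Real.sqrt 3 / 2 * u) := by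
              rw [← Real.exp_add]; ring_nf
          _ ≤ Real.exp (-(1/2) * u) := by
              apply Real.exp_le_exp.mpr
              have hkL : (k:ℝ) * (2 * u / L n) ≤ u / 4 := by
                rw [mul_div_assoc', div_le_div_iff₀ hLn0 (by norm_num : (0:ℝ) < 4)]
                nlinarith [hn.2.1, hu0.le, mul_nonneg (sub_nonneg.mpr hn.2.1) hu0.le]
              nlinarith [mul_le_mul_of_nonneg_right hsqrt3 hu0.le]
      · rw [hF]
        simp only [Set.indicator_of_notMem hu]
        simpa using hbnn u
    -- pointwise limit
    have h_lim : ∀ᵐ u : ℝ, Tendsto (fun n => F n u) atTop (nhds (g u)) := by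
      have hne : ∀ᵐ u : ℝ, u ≠ 0 := by
        rw [ae_iff]
        have hset : {a : ℝ | ¬a ≠ 0} = {(0:ℝ)} := by ext x; simp
        rw [hset]
        exact measure_singleton 0
      filter_upwards [hne] with u hu
      rcases lt_or_gt_of_ne hu with hneg | hpos
      · have hFz : ∀ n, F n u = 0 := by
          intro n
          rw [hF]
          apply Set.indicator_of_notMem
          intro hmem
          exact absurd hmem.1 (not_lt.mpr hneg.le)
        have hgz : g u = 0 := by
          rw [hg]
          apply Set.indicator_of_notMem
          simpa using hneg.le
        simp only [hFz, hgz]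
        exact tendsto_const_nhds
      · have hgu : g u = Real.exp (-u) := by
          rw [hg, Set.indicator_of_mem (Set.mem_Ioi.mpr hpos)]
        rw [hgu]
        -- φ n u → u
        have hφt : Tendsto (fun n => φ n u) atTop (nhds u) := by
          have hlow : Tendsto (fun n : ℕ => u * Real.sqrt (1 - (u * π / (2 * L n))^2))
              atTop (nhds u) := by
            have h1 : Tendsto (fun n : ℕ => u * π / (2 * L n)) atTop (nhds 0) :=
              tendsto_const_nhds.div_atTop (hLtop.const_mul_atTop two_pos)
            have h2 : Tendsto (fun n : ℕ => 1 - (u * π / (2 * L n))^2) atTop (nhds 1) := by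
              have := (h1.pow 2)
              simpa using tendsto_const_nhds.sub this
            have h3 : Tendsto (fun n : ℕ => Real.sqrt (1 - (u * π / (2 * L n))^2))
                atTop (nhds 1) := by
              have := (Real.continuous_sqrt.tendsto 1).comp h2
              rw [Real.sqrt_one] at this
              exact this
            simpa using tendsto_const_nhds.mul h3
          apply tendsto_of_tendsto_of_tendsto_of_le_of_le' hlow tendsto_const_nhds
          · filter_upwards [hgood] with n hn
            obtain ⟨hrn0, hrsq, hLr⟩ := hrL n hn.1 hn.2.2.1 hn.2.2.2
            have hn0 : (0:ℝ) < n := lt_of_lt_of_le one_pos hn.2.2.2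
            have heq : u / (2 * n * (r n)^2) = u * π / (2 * L n) := by
              rw [← hLr]
              field_simp
            have := hφlb n hn0 hrn0 u hpos.le
            rw [heq] at this
            exact this
          · filter_upwards [hgood] with n hn
            obtain ⟨hrn0, hrsq, hLr⟩ := hrL n hn.1 hn.2.2.1 hn.2.2.2
            have hn0 : (0:ℝ) < n := lt_of_lt_of_le one_pos hn.2.2.2
            exact hφub n hn0 hrn0 u hpos.le
        have hht : Tendsto (fun n => h n u) atTop (nhds (Real.exp (-u))) := by
          have h1 : Tendsto (fun n => 2 * φ n u / L n) atTop (nhds 0) :=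
            (tendsto_const_nhds.mul hφt).div_atTop hLtop
          have h2 : Tendsto (fun n => (1 + 2 * φ n u / L n) ^ k) atTop (nhds 1) := by
            have h2' : Tendsto (fun n => 1 + 2 * φ n u / L n) atTop (nhds (1 + 0)) :=
              Tendsto.add (tendsto_const_nhds (x := (1:ℝ))) h1
            rw [add_zero] at h2'
            simpa using h2'.pow k
          have h3 : Tendsto (fun n => Real.exp (-(φ n u))) atTop (nhds (Real.exp (-u))) :=
            (Real.continuous_exp.tendsto (-u)).comp hφt.neg
          have := h2.mul h3
          simpa [hh] using this
        apply Tendsto.congr' _ hht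
        filter_upwards [hBtop.eventually_ge_atTop u] with n hn
        rw [hF]
        simp only []
        rw [Set.indicator_of_mem (Set.mem_Ioc.mpr ⟨hpos, hn⟩)]
    have := tendsto_integral_filter_of_dominated_convergence bound hFmeas h_bound hbint h_lim
    rw [hgint] at this
    exact this
  -- Step 3: P → C
  have hstep3 : Tendsto P atTop (nhds C) := by
    have hq0 : Tendsto (fun n : ℕ => L n / Real.log n) atTop (nhds 1) := by
      have t1 : Tendsto (fun n : ℕ => Real.log (Real.log n) / Real.log n) atTop (nhds 0) :=
        (Real.isLittleO_log_id_atTop.tendsto_div_nhds_zero).comp hlogtop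
      have t2 : Tendsto (fun n : ℕ => ξ / Real.log n) atTop (nhds 0) :=
        tendsto_const_nhds.div_atTop hlogtop
      have t3 : Tendsto (fun n : ℕ =>
          1 + ((2*(k:ℝ)-1) * (Real.log (Real.log n)/Real.log n) + ξ/Real.log n))
          atTop (nhds (1 + ((2*(k:ℝ)-1)*0 + 0))) :=
        tendsto_const_nhds.add ((tendsto_const_nhds.mul t1).add t2)
      apply Tendsto.congr' _ (by simpa using t3)
      filter_upwards [hgood] with n hn
      have hl0 : Real.log n ≠ 0 := by linarith [hn.1]
      simp only [hL]
      field_simp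
      ring
    have hrp : Tendsto (fun n : ℕ => (L n / Real.log n) ^ ((k:ℝ) - 1/2)) atTop (nhds 1) := by
      have := hq0.rpow_const (p := (k:ℝ)-1/2) (Or.inl one_ne_zero)
      simpa using this
    have hcq : Tendsto (fun n => C * (L n / Real.log n) ^ ((k:ℝ)-1/2)) atTop (nhds C) := by
      simpa using (tendsto_const_nhds.mul hrp)
    apply Tendsto.congr' _ hcq
    filter_upwards [hgood] with n hn
    have hLn0 : 0 < L n := lt_of_lt_of_le one_pos hn.2.2.1
    have := (P_eq k ξ (n:ℝ) (Real.log n) (L n) hn.2.2.2 hn.1 hLn0 rfl rfl).symm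
    rw [hP]
    simp only []
    rw [hr n]
    exact this
  have : Tendsto (fun n => P n * J n) atTop (nhds C) := by
    simpa using hstep3.mul hstep2
  exact Tendsto.congr' (hstep1.mono fun n hn => hn.symm) this
end

section
/- Let Ω ⊂ ℝ² be a bounded convex region, C > 0 a constant with |B(x,r) ∩ Ω| ≥ C π r² for all x ∈ Ω, and suppose a measurable set A ⊂ Ω has |A| ≤ K·r² for a constant K. If r = r_n satisfies n π r_n² ∼ log n, then n·∫_A (n|B(x,r_n) ∩ Ω|)^k exp(−n|B(x,r_n) ∩ Ω|)/k! dx → 0 as n → ∞. -/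
open Real MeasureTheory Metric Filter

lemma aux_tendsto (C : ℝ) (hC : 0 < C) (k : ℕ) :
    Tendsto (fun t : ℝ => t ^ k * Real.exp (-(C * t))) atTop (nhds 0) := by
  have h := tendsto_pow_mul_exp_neg_atTop_nhds_zero k
  have hCt : Tendsto (fun t : ℝ => C * t) atTop atTop :=
    Filter.tendsto_id.const_mul_atTop hC
  have h2 := (h.comp hCt).const_mul ((C ^ k)⁻¹)
  rw [mul_zero] at h2
  refine h2.congr fun t => ?_
  simp only [Function.comp, mul_pow]
  field_simp

lemma vol_cap_le (Ω : Set (EuclideanSpace ℝ (Fin 2))) (x : EuclideanSpace ℝ (Fin 2))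
    (ρ : ℝ) (hρ : 0 ≤ ρ) :
    (volume (closedBall x ρ ∩ Ω)).toReal ≤ π * ρ ^ 2 := by
  have hb : volume (closedBall x ρ) = ENNReal.ofReal ρ ^ 2 * ENNReal.ofReal π := by
    rw [EuclideanSpace.volume_closedBall]
    norm_num [Real.Gamma_two, Real.sq_sqrt Real.pi_pos.le]
  have hle : volume (closedBall x ρ ∩ Ω) ≤ volume (closedBall x ρ) :=
    measure_mono Set.inter_subset_left
  calc (volume (closedBall x ρ ∩ Ω)).toReal ≤ (volume (closedBall x ρ)).toReal := by
        apply ENNReal.toReal_mono _ hle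
        rw [hb]; exact ENNReal.mul_ne_top (ENNReal.pow_ne_top ENNReal.ofReal_ne_top) ENNReal.ofReal_ne_top
    _ = π * ρ ^ 2 := by
        rw [hb]
        rw [ENNReal.toReal_mul, ENNReal.toReal_pow, ENNReal.toReal_ofReal hρ,
          ENNReal.toReal_ofReal Real.pi_pos.le]
        ring

/-- generalizing Proposition 2: Let Ω ⊆ ℝ² be a bounded convex region,
C > 0 with |B(x,r_n) ∩ Ω| ≥ C π r_n² for all x ∈ Ω, and let A_n ⊆ Ω be measurable sets
with |A_n| ≤ K·r_n². If n π r_n² ∼ log n, then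
n·∫_{A_n} (n|B(x,r_n)∩Ω|)^k e^{−n|B(x,r_n)∩Ω|}/k! dx → 0. -/
theorem stmt_15 (Ω : Set (EuclideanSpace ℝ (Fin 2)))
    (hconv : Convex ℝ Ω) (hbdd : Bornology.IsBounded Ω)
    (C K : ℝ) (hC : 0 < C) (k : ℕ) (r : ℕ → ℝ) (hrpos : ∀ n, 0 < r n)
    (hball : ∀ n : ℕ, ∀ x ∈ Ω,
      ENNReal.ofReal (C * π * r n ^ 2) ≤ volume (closedBall x (r n) ∩ Ω))
    (A : ℕ → Set (EuclideanSpace ℝ (Fin 2)))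
    (hA : ∀ n, A n ⊆ Ω) (hAm : ∀ n, MeasurableSet (A n))
    (hAvol : ∀ n, (volume (A n)).toReal ≤ K * r n ^ 2)
    (hsim : Tendsto (fun n : ℕ => (n : ℝ) * π * r n ^ 2 / Real.log n) atTop (nhds 1)) :
    Tendsto (fun n : ℕ =>
        (n : ℝ) * ∫ x in A n,
          ((n : ℝ) * (volume (closedBall x (r n) ∩ Ω)).toReal) ^ k *
            Real.exp (-(n : ℝ) * (volume (closedBall x (r n) ∩ Ω)).toReal) /
              (Nat.factorial k))
      atTop (nhds 0) := by
  set a : ℕ → ℝ := fun n => (n : ℝ) * π * r n ^ 2 with ha_def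
  have hK : 0 ≤ K := by
    have h0 : (0:ℝ) ≤ K * r 0 ^ 2 := le_trans ENNReal.toReal_nonneg (hAvol 0)
    nlinarith [pow_pos (hrpos 0) 2, h0]
  -- a n → ∞
  have haTop : Tendsto a atTop atTop := by
    have hlog : Tendsto (fun n : ℕ => Real.log n) atTop atTop :=
      Real.tendsto_log_atTop.comp tendsto_natCast_atTop_atTop
    have hmul := Filter.Tendsto.pos_mul_atTop one_pos hsim hlog
    refine hmul.congr' ?_
    filter_upwards [eventually_ge_atTop 2] with n hn
    have hlogpos : 0 < Real.log n := by
      apply Real.log_pos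
      exact_mod_cast by omega
    field_simp
    rfl
  -- pointwise bound M n
  set M : ℕ → ℝ := fun n => a n ^ k * Real.exp (-(C * a n)) / Nat.factorial k with hM_def
  have hMnonneg : ∀ n, 0 ≤ M n := fun n =>
    div_nonneg (mul_nonneg (by positivity) (Real.exp_pos _).le) (by positivity)
  have hbound : ∀ n : ℕ, ∀ x ∈ A n,
      ‖((n : ℝ) * (volume (closedBall x (r n) ∩ Ω)).toReal) ^ k *
        Real.exp (-(n : ℝ) * (volume (closedBall x (r n) ∩ Ω)).toReal) /
          (Nat.factorial k)‖ ≤ M n := by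
    intro n x hx
    have hxΩ := hA n hx
    set V : ℝ := (volume (closedBall x (r n) ∩ Ω)).toReal with hV
    have hVnn : 0 ≤ V := ENNReal.toReal_nonneg
    have hVub : V ≤ π * r n ^ 2 := vol_cap_le Ω x (r n) (hrpos n).le
    have hVlb : C * π * r n ^ 2 ≤ V := by
      rw [hV]
      refine ENNReal.toReal_mono ?_ ?_ |>.trans_eq' (ENNReal.toReal_ofReal (r := C * π * r n ^ 2) (by positivity))
      · refine ne_of_lt (lt_of_le_of_lt (measure_mono Set.inter_subset_left) ?_)
        exact measure_closedBall_lt_top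
      · exact hball n x hxΩ
    rw [Real.norm_eq_abs, abs_of_nonneg (by positivity)]
    have h1 : ((n : ℝ) * V) ^ k ≤ a n ^ k := by
      apply pow_le_pow_left₀ (by positivity)
      calc (n : ℝ) * V ≤ (n : ℝ) * (π * r n ^ 2) :=
            mul_le_mul_of_nonneg_left hVub n.cast_nonneg
        _ = a n := by simp [ha_def]; ring
    have h2 : Real.exp (-(n : ℝ) * V) ≤ Real.exp (-(C * a n)) := by
      apply Real.exp_le_exp.mpr
      have : C * a n ≤ (n : ℝ) * V := by
        have := mul_le_mul_of_nonneg_left hVlb n.cast_nonneg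
        simp only [ha_def]
        nlinarith
      linarith
    have h3 : ((n : ℝ) * V) ^ k * Real.exp (-(n : ℝ) * V)
        ≤ a n ^ k * Real.exp (-(C * a n)) :=
      mul_le_mul h1 h2 (Real.exp_pos _).le (by positivity)
    rw [hM_def]
    exact (div_le_div_iff_of_pos_right (by positivity)).mpr h3
  -- squeeze
  have hΩvol : volume Ω < ⊤ := hbdd.measure_lt_top
  refine squeeze_zero (g := fun n : ℕ => (n : ℝ) * (M n * (K * r n ^ 2)))
      (fun n : ℕ => mul_nonneg n.cast_nonneg
        (setIntegral_nonneg (hAm n) fun x _ => by positivity))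
      (fun n : ℕ => ?_) ?_
  · 
    have hAfin : volume (A n) < ⊤ := lt_of_le_of_lt (measure_mono (hA n)) hΩvol
    have hnorm := norm_setIntegral_le_of_norm_le_const (μ := volume) hAfin (hbound n)
    have hInt : (∫ x in A n,
        ((n : ℝ) * (volume (closedBall x (r n) ∩ Ω)).toReal) ^ k *
          Real.exp (-(n : ℝ) * (volume (closedBall x (r n) ∩ Ω)).toReal) /
            (Nat.factorial k)) ≤ M n * (K * r n ^ 2) := by
      refine (le_abs_self _).trans ?_
      rw [← Real.norm_eq_abs]
      refine hnorm.trans ?_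
      exact mul_le_mul_of_nonneg_left (hAvol n) (hMnonneg n)
    exact mul_le_mul_of_nonneg_left hInt n.cast_nonneg
  · have h := ((aux_tendsto C hC (k+1)).comp haTop).const_mul (K / (π * Nat.factorial k))
    rw [mul_zero] at h
    refine h.congr fun n => ?_
    have hk : (Nat.factorial k : ℝ) ≠ 0 := by positivity
    simp only [Function.comp, hM_def, ha_def, pow_succ]
    field_simp
end
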